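/- Let ρ : ℝ^n → ℝ be a mollifier, h > 0, and u : ℝ^n → ℝ continuously differentiable. Then for every x ∈ ℝ^n the mollification u_h is differentiable at x and its gradient ∇u_h(x) lies in the convex hull of the set {∇u(x − h z) : z ∈ supp ρ}. (This is part of the paper's Proposition: the gradient ∇u_h(x), x ∈ Ω, is always inside the convex hull of all possible gradients of u in Ω + h(−P).) -/

import Mathlib

open MeasureTheory

open MeasureTheory Set Module
open scoped Pointwise NNReal ENNReal

/-- Key geometric lemma (zero-based version): if `0` is in the closure of the convex hull of
`S` and every continuous linear functional that is `≤ 0` on `S` actually vanishes on `S`,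
then `0` is in the convex hull of `S`. Proved by induction on dimension. -/
lemma aux_zero_mem_convexHull : ∀ (n : ℕ) (E : Type) [NormedAddCommGroup E]
    [InnerProductSpace ℝ E] [FiniteDimensional ℝ E] (S : Set E), finrank ℝ E ≤ n →
    (0:E) ∈ closure (convexHull ℝ S) →
    (∀ ℓ : E →L[ℝ] ℝ, (∀ s ∈ S, ℓ s ≤ 0) → ∀ s ∈ S, ℓ s = 0) →
    (0:E) ∈ convexHull ℝ S := by
  intro n
  induction n with
  | zero =>
    intro E _ _ _ S hrank h0 _
    have hr0 : finrank ℝ E = 0 := le_antisymm hrank (Nat.zero_le _)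
    have hsub : Subsingleton E := finrank_zero_iff.mp hr0
    obtain ⟨c, hc⟩ : (convexHull ℝ S).Nonempty := by
      rcases Set.eq_empty_or_nonempty (convexHull ℝ S) with hev | hsn
      · rw [hev] at h0; simp at h0
      · exact hsn
    simpa [Subsingleton.elim (0:E) c] using hc
  | succ n ih =>
    intro E _ _ _ S hrank h0 hface
    set C := convexHull ℝ S with hCdef
    have hC : Convex ℝ C := convex_convexHull ℝ S
    set D := closure C with hDdef
    have hD : Convex ℝ D := hC.closure
    have h0D : (0:E) ∈ D := h0
    by_cases hint : (0:E) ∈ interior D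
    · -- interior case: `0` is in the interior of `C` via a small backward shift.
      have haffD : affineSpan ℝ D = ⊤ :=
        hD.interior_nonempty_iff_affineSpan_eq_top.mp ⟨0, hint⟩
      have hDsub : D ⊆ (affineSpan ℝ C : Set E) := by
        have hcl : IsClosed (affineSpan ℝ C : Set E) :=
          (affineSpan ℝ C).closed_of_finiteDimensional
        exact hcl.closure_subset_iff.mpr (subset_affineSpan ℝ C)
      have haffC : affineSpan ℝ C = ⊤ := by
        refine top_le_iff.mp ?_
        rw [← haffD, affineSpan_le]
        exact hDsub
      obtain ⟨y, hy⟩ : (interior C).Nonempty :=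
        hC.interior_nonempty_iff_affineSpan_eq_top.mpr haffC
      have hcont : Continuous fun t : ℝ => (-t) • y := continuous_neg.smul continuous_const
      have hopen : IsOpen ((fun t : ℝ => (-t) • y) ⁻¹' interior D) :=
        isOpen_interior.preimage hcont
      have h0mem : (0:ℝ) ∈ (fun t : ℝ => (-t) • y) ⁻¹' interior D := by
        simpa using hint
      obtain ⟨ε, hε, hballsub⟩ := Metric.isOpen_iff.mp hopen 0 h0mem
      set t := ε/2 with ht
      have htpos : 0 < t := by positivity
      have hmem : (-t) • y ∈ interior D := by
        apply hballsub
        simp only [Metric.mem_ball, Real.dist_eq, sub_zero]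
        rw [abs_of_pos htpos]
        linarith
      have hseg : (0:E) ∈ openSegment ℝ ((-t) • y) y := by
        refine ⟨1/(1+t), t/(1+t), by positivity, by positivity, by field_simp, ?_⟩
        have hco : (1/(1+t)) * (-t) + t/(1+t) = 0 := by field_simp; ring
        rw [smul_smul, ← add_smul, hco, zero_smul]
      have : openSegment ℝ ((-t) • y) y ⊆ interior C :=
        hC.openSegment_closure_interior_subset_interior (interior_subset hmem) hy
      exact interior_subset (this hseg)
    · by_cases hne : (interior D).Nonempty
      · -- `0` on the relative boundary with nonempty interior: contradiction with `hface`.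
        exfalso
        obtain ⟨ℓ, hℓ⟩ := geometric_hahn_banach_open_point hD.interior isOpen_interior hint
        have hℓ0 : ∀ a ∈ interior D, ℓ a < 0 := by
          intro a ha; simpa using hℓ a ha
        have hclsub : closure (interior D) ⊆ {z : E | ℓ z ≤ 0} := by
          apply closure_minimal ?_ (isClosed_le ℓ.continuous continuous_const)
          intro z hz; exact (hℓ0 z hz).le
        have hle : ∀ s ∈ S, ℓ s ≤ 0 := by
          intro s hs
          have hsD : s ∈ D := subset_closure (subset_convexHull ℝ S hs)
          obtain ⟨a, ha⟩ := hne
          have hsegsub : openSegment ℝ a s ⊆ interior D :=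
            hD.openSegment_interior_closure_subset_interior ha (subset_closure hsD)
          have hscl : s ∈ closure (openSegment ℝ a s) := by
            rw [closure_openSegment]; exact right_mem_segment ℝ a s
          exact hclsub ((closure_mono hsegsub) hscl)
        have heq := hface ℓ hle
        have hker : D ⊆ {z : E | ℓ z = 0} := by
          apply closure_minimal ?_ (isClosed_eq ℓ.continuous continuous_const)
          apply convexHull_min
          · intro s hs; exact heq s hs
          · intro a ha b hb ta tb hta htb htab
            simp only [Set.mem_setOf_eq] at ha hb ⊢
            simp [ha, hb, map_add, _root_.map_smul, smul_eq_mul]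
        obtain ⟨a, ha⟩ := hne
        have h1 : ℓ a < 0 := hℓ0 a ha
        have h2 : ℓ a = 0 := hker (interior_subset ha)
        linarith
      · -- flat case: recurse into the span of `S`.
        set W := Submodule.span ℝ S with hWdef
        have hSW : S ⊆ (W : Set E) := Submodule.subset_span
        have hWlt : W < ⊤ := by
          rcases lt_or_eq_of_le (le_top (a := W)) with hlt | heq
          · exact hlt
          exfalso
          apply hne
          rw [hD.interior_nonempty_iff_affineSpan_eq_top]
          have hDne : ((affineSpan ℝ D : AffineSubspace ℝ E) : Set E).Nonempty :=
            ⟨0, subset_affineSpan ℝ D h0D⟩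
          rw [← AffineSubspace.direction_eq_top_iff_of_nonempty hDne]
          rw [direction_affineSpan]
          refine top_le_iff.mp ?_
          rw [← heq, hWdef, Submodule.span_le]
          intro s hs
          have := vsub_mem_vectorSpan ℝ
            (subset_closure (subset_convexHull ℝ S hs) : s ∈ D) h0D
          simpa using this
        have hrankW : finrank ℝ W ≤ n := by
          have hlt := Submodule.finrank_lt hWlt.ne
          omega
        set S' : Set W := ((↑) : W → E) ⁻¹' S with hS'def
        have himg : ((↑) : W → E) '' S' = S := by
          rw [hS'def, Set.image_preimage_eq_inter_range, Subtype.range_coe]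
          exact Set.inter_eq_left.mpr hSW
        have hclosedW : IsClosed (W : Set E) := Submodule.closed_of_finiteDimensional W
        have hemb : Topology.IsClosedEmbedding ((↑) : W → E) :=
          hclosedW.isClosedEmbedding_subtypeVal
        have hhull : convexHull ℝ (((↑) : W → E) '' S') = ((↑) : W → E) '' convexHull ℝ S' := by
          have := W.subtype.image_convexHull S'
          simpa using this.symm
        have h0' : (0 : W) ∈ closure (convexHull ℝ S') := by
          have hmem0 : (0:E) ∈ closure (((↑) : W → E) '' convexHull ℝ S') := by
            rw [← hhull, himg]; exact h0
          rw [hemb.closure_image_eq] at hmem0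
          obtain ⟨w, hw, hw0⟩ := hmem0
          have hwz : w = 0 := Subtype.ext hw0
          rwa [hwz] at hw
        have hface' : ∀ ℓ' : W →L[ℝ] ℝ, (∀ s ∈ S', ℓ' s ≤ 0) → ∀ s ∈ S', ℓ' s = 0 := by
          intro ℓ' hle s' hs'
          haveI : CompleteSpace W := FiniteDimensional.complete ℝ W
          set ℓ : E →L[ℝ] ℝ := ℓ'.comp (W.orthogonalProjectionOnto) with hℓdef
          have hproj : ∀ z (hz : z ∈ W), ℓ z = ℓ' ⟨z, hz⟩ := by
            intro z hz
            have : W.orthogonalProjectionOnto ((⟨z, hz⟩ : W) : E) = ⟨z, hz⟩ :=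
              Submodule.orthogonalProjectionOnto_mem_subspace_eq_self ⟨z, hz⟩
            simp only [hℓdef, ContinuousLinearMap.comp_apply]
            exact congrArg ℓ' this
          have hleE : ∀ z ∈ S, ℓ z ≤ 0 := by
            intro z hz
            rw [hproj z (hSW hz)]
            exact hle ⟨z, hSW hz⟩ hz
          have := hface ℓ hleE s' (by exact hs')
          rwa [hproj s' s'.2, Subtype.coe_eta] at this
        have h0W : (0 : W) ∈ convexHull ℝ S' := ih W S' hrankW h0' hface'
        have : (0:E) ∈ ((↑) : W → E) '' convexHull ℝ S' := ⟨0, h0W, rfl⟩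
        rw [← hhull, himg] at this
        exact this

/-- Translated version of `aux_zero_mem_convexHull`. -/
lemma aux_mem_convexHull {E : Type} [NormedAddCommGroup E] [InnerProductSpace ℝ E]
    [FiniteDimensional ℝ E] (S : Set E) (b : E) (h0 : b ∈ closure (convexHull ℝ S))
    (hface : ∀ ℓ : E →L[ℝ] ℝ, (∀ s ∈ S, ℓ s ≤ ℓ b) → ∀ s ∈ S, ℓ s = ℓ b) :
    b ∈ convexHull ℝ S := by
  set T : Set E := (-b) +ᵥ S with hTdef
  have hhull : convexHull ℝ T = (-b) +ᵥ convexHull ℝ S := convexHull_vadd (-b) S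
  have hcl : closure (convexHull ℝ T) = (-b) +ᵥ closure (convexHull ℝ S) := by
    rw [hhull]
    exact (Homeomorph.addLeft (-b)).image_closure (convexHull ℝ S) |>.symm ▸ rfl
  have h0T : (0:E) ∈ closure (convexHull ℝ T) := by
    rw [hcl]
    exact ⟨b, h0, by simp⟩
  have hfaceT : ∀ ℓ : E →L[ℝ] ℝ, (∀ s ∈ T, ℓ s ≤ 0) → ∀ s ∈ T, ℓ s = 0 := by
    intro ℓ hle s hs
    obtain ⟨z, hz, rfl⟩ := hs
    have hnb : ℓ (-b) = - ℓ b := map_neg ℓ b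
    have h1 : ∀ s' ∈ S, ℓ s' ≤ ℓ b := by
      intro s' hs'
      have hx := hle ((-b) + s') ⟨s', hs', rfl⟩
      rw [map_add, hnb] at hx
      linarith
    have h2 := hface ℓ h1 z hz
    simp only [vadd_eq_add, map_add, hnb]
    linarith
  have h0c : (0:E) ∈ convexHull ℝ T := aux_zero_mem_convexHull _ E T le_rfl h0T hfaceT
  rw [hhull] at h0c
  obtain ⟨c, hc, hc0⟩ := h0c
  have : c = b := by
    have : (-b) + c = 0 := hc0
    linear_combination (norm := abel) this
  rwa [this] at hc

/-- The barycenter `∫ ρ z • v z` lies in the convex hull of `v '' support ρ`. -/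
lemma aux_integral_mem_convexHull (m : ℕ) (ρ : EuclideanSpace ℝ (Fin m) → ℝ)
    (hρc : Continuous ρ) (hρ0 : ∀ z, 0 ≤ ρ z) (hρsupp : HasCompactSupport ρ)
    (hρ1 : ∫ z, ρ z = 1) (v : EuclideanSpace ℝ (Fin m) → EuclideanSpace ℝ (Fin m))
    (hv : Continuous v) :
    (∫ z, ρ z • v z) ∈ convexHull ℝ (v '' Function.support ρ) := by
  set S : Set (EuclideanSpace ℝ (Fin m)) := v '' Function.support ρ with hSdef
  set ρ' : EuclideanSpace ℝ (Fin m) → ℝ≥0 := fun z => ⟨ρ z, hρ0 z⟩ with hρ'def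
  have hρ'coe : ∀ z, (ρ' z : ℝ) = ρ z := fun z => rfl
  have hρ'c : Continuous ρ' := by rw [hρ'def]; exact hρc.subtype_mk _
  have hρ'm : Measurable ρ' := hρ'c.measurable
  set μ : Measure (EuclideanSpace ℝ (Fin m)) :=
    volume.withDensity (fun z => (ρ' z : ℝ≥0∞)) with hμdef
  have hρint : Integrable ρ := hρc.integrable_of_hasCompactSupport hρsupp
  have hμprob : IsProbabilityMeasure μ := by
    constructor
    rw [hμdef, withDensity_apply _ MeasurableSet.univ, Measure.restrict_univ]
    rw [lintegral_coe_eq_integral ρ' (by simpa only [hρ'coe] using hρint)]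
    simp only [hρ'coe]
    rw [hρ1]
    simp
  have hsmul_eq : (fun z => ρ' z • v z) = fun z => ρ z • v z := by
    funext z
    rw [NNReal.smul_def, hρ'coe]
  have hvint : Integrable (fun z => ρ z • v z) volume := by
    apply Continuous.integrable_of_hasCompactSupport (hρc.smul hv)
    apply HasCompactSupport.mono hρsupp
    intro z hz
    simp only [Function.mem_support, ne_eq] at hz ⊢
    intro h0
    exact hz (by simp [h0])
  have hvμ : Integrable v μ := by
    rw [hμdef, integrable_withDensity_iff_integrable_smul hρ'm, hsmul_eq]
    exact hvint
  have hint_eq : (∫ z, v z ∂μ) = ∫ z, ρ z • v z := by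
    rw [hμdef, integral_withDensity_eq_integral_smul hρ'm v, hsmul_eq]
  set b : EuclideanSpace ℝ (Fin m) := ∫ z, ρ z • v z with hbdef
  have hb_cl : b ∈ closure (convexHull ℝ S) := by
    rw [← hint_eq]
    apply Convex.integral_mem ((convex_convexHull ℝ S).closure) isClosed_closure ?_ hvμ
    rw [hμdef, ae_withDensity_iff hρ'm.coe_nnreal_ennreal]
    apply ae_of_all
    intro z hz
    have hzs : z ∈ Function.support ρ := by
      simp only [Function.mem_support, ne_eq]
      intro h0
      apply hz
      have : ρ' z = 0 := by
        ext
        rw [hρ'coe, h0, NNReal.coe_zero]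
      rw [this]
      norm_cast
    exact subset_closure (subset_convexHull ℝ S ⟨z, hzs, rfl⟩)
  have hface : ∀ ℓ : EuclideanSpace ℝ (Fin m) →L[ℝ] ℝ,
      (∀ s ∈ S, ℓ s ≤ ℓ b) → ∀ s ∈ S, ℓ s = ℓ b := by
    intro ℓ hle s hs
    set φ : EuclideanSpace ℝ (Fin m) → ℝ := fun z => ρ z * (ℓ b - ℓ (v z)) with hφdef
    have hφ0 : ∀ z, 0 ≤ φ z := by
      intro z
      by_cases hz : ρ z = 0
      · simp [hφdef, hz]
      · apply mul_nonneg (hρ0 z)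
        have hmem : v z ∈ S := ⟨z, hz, rfl⟩
        linarith [hle _ hmem]
    have hφc : Continuous φ := hρc.mul (continuous_const.sub (ℓ.continuous.comp hv))
    have hφsupp : HasCompactSupport φ := by
      apply HasCompactSupport.mono hρsupp
      intro z hz
      simp only [Function.mem_support, ne_eq, hφdef] at hz ⊢
      intro h0
      exact hz (by simp [h0])
    have hφint : Integrable φ := hφc.integrable_of_hasCompactSupport hφsupp
    have hℓint : Integrable (fun z => ρ z * ℓ (v z)) volume := by
      have heq : (fun z => ρ z * ℓ (v z)) = fun z => ℓ (ρ z • v z) := by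
        funext z; simp [smul_eq_mul]
      rw [heq]
      exact ℓ.integrable_comp hvint
    have hintφ : (∫ z, φ z) = 0 := by
      have h1 : (∫ z, φ z) = (∫ z, ρ z * ℓ b) - ∫ z, ρ z * ℓ (v z) := by
        rw [← integral_sub (hρint.mul_const _) hℓint]
        congr 1; funext z; simp [hφdef, mul_sub]
      have h2 : (∫ z, ρ z * ℓ b) = ℓ b := by
        rw [integral_mul_const, hρ1, one_mul]
      have h3 : (∫ z, ρ z * ℓ (v z)) = ℓ b := by
        have heq : (fun z => ρ z * ℓ (v z)) = fun z => ℓ (ρ z • v z) := by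
          funext z; simp [smul_eq_mul]
        rw [heq, ContinuousLinearMap.integral_comp_comm ℓ hvint]
      rw [h1, h2, h3, sub_self]
    have hae : φ =ᵐ[volume] 0 := (integral_eq_zero_iff_of_nonneg hφ0 hφint).mp hintφ
    have hzero : φ = 0 := (Continuous.ae_eq_iff_eq volume hφc continuous_const).mp hae
    obtain ⟨z, hz, rfl⟩ := hs
    have h0 : ρ z * (ℓ b - ℓ (v z)) = 0 := congrFun hzero z
    rcases mul_eq_zero.mp h0 with hcase | hcase
    · exact absurd hcase hz
    · linarith
  exact aux_mem_convexHull S b hb_cl hface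

set_option maxHeartbeats 1000000 in
set_option synthInstance.maxHeartbeats 200000 in
/-- For a `C¹` function `u`, the mollification `u_h(x) = ∫ ρ(z) u (x − h z) dz` is
differentiable at every `x`, and its gradient lies in the convex hull of the set of
gradients `{∇u(x − h z) : z ∈ supp ρ}`. -/
theorem stmt_5 (n : ℕ) (ρ : EuclideanSpace ℝ (Fin n) → ℝ)
    (hρc : Continuous ρ) (hρ0 : ∀ z, 0 ≤ ρ z) (hρsupp : HasCompactSupport ρ)
    (hρ1 : ∫ z, ρ z = 1)
    (h : ℝ) (hh : 0 < h)
    (u : EuclideanSpace ℝ (Fin n) → ℝ) (hu : ContDiff ℝ 1 u) :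
    ∀ x, ∃ g, HasGradientAt (fun y => ∫ z, ρ z * u (y - h • z)) g x ∧
      g ∈ convexHull ℝ ((fun z => gradient u (x - h • z)) '' Function.support ρ) := by
  intro x
  have hucont : Continuous u := hu.continuous
  have hudiff : Differentiable ℝ u := hu.differentiable one_ne_zero
  have hfc : Continuous (fderiv ℝ u) := hu.continuous_fderiv one_ne_zero
  set K : Set (EuclideanSpace ℝ (Fin n)) :=
    (fun p : EuclideanSpace ℝ (Fin n) × EuclideanSpace ℝ (Fin n) => p.1 - h • p.2) ''
      (Metric.closedBall x 1 ×ˢ tsupport ρ) with hKdef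
  have hKcomp : IsCompact K :=
    ((isCompact_closedBall x 1).prod hρsupp).image
      (continuous_fst.sub ((continuous_const (y := h)).smul continuous_snd))
  obtain ⟨C, hC⟩ := hKcomp.exists_bound_of_continuousOn hfc.continuousOn
  set C' : ℝ := max C 0 with hC'def
  have hFcont : ∀ y, Continuous fun z : EuclideanSpace ℝ (Fin n) => ρ z * u (y - h • z) := by
    intro y
    exact hρc.mul (hucont.comp (continuous_const.sub ((continuous_const (y := h)).smul continuous_id)))
  have hFsupp : ∀ y, HasCompactSupport fun z : EuclideanSpace ℝ (Fin n) =>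
      ρ z * u (y - h • z) := by
    intro y
    apply HasCompactSupport.mono hρsupp
    intro z hz
    simp only [Function.mem_support, ne_eq] at hz ⊢
    intro h0; exact hz (by simp [h0])
  have hderiv : HasFDerivAt (fun y => ∫ z, ρ z * u (y - h • z))
      (∫ z, ρ z • fderiv ℝ u (x - h • z)) x := by
    apply hasFDerivAt_integral_of_dominated_of_fderiv_le
      (F' := fun y z => ρ z • fderiv ℝ u (y - h • z)) (bound := fun z => ρ z * C')
      (Metric.ball_mem_nhds x one_pos)
    · exact Filter.Eventually.of_forall fun y => (hFcont y).aestronglyMeasurable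
    · exact (hFcont x).integrable_of_hasCompactSupport (hFsupp x)
    · apply Continuous.aestronglyMeasurable
      exact hρc.smul (hfc.comp (continuous_const.sub ((continuous_const (y := h)).smul continuous_id)))
    · apply ae_of_all
      intro z y hy
      rw [norm_smul (ρ z) (fderiv ℝ u (y - h • z)), Real.norm_eq_abs, abs_of_nonneg (hρ0 z)]
      by_cases hz : ρ z = 0
      · simp [hz, hC'def, le_max_right]
      · apply mul_le_mul_of_nonneg_left ?_ (hρ0 z)
        have hzK : y - h • z ∈ K :=
          ⟨(y, z), ⟨Metric.ball_subset_closedBall hy, subset_closure hz⟩, rfl⟩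
        exact le_trans (hC _ hzK) (le_max_left _ _)
    · exact (hρc.integrable_of_hasCompactSupport hρsupp).mul_const _
    · apply ae_of_all
      intro z y hy
      have h1 : HasFDerivAt (fun y : EuclideanSpace ℝ (Fin n) => y - h • z)
          (ContinuousLinearMap.id ℝ (EuclideanSpace ℝ (Fin n))) y :=
        (hasFDerivAt_id y).sub_const _
      have h2 : HasFDerivAt u (fderiv ℝ u (y - h • z)) (y - h • z) :=
        (hudiff (y - h • z)).hasFDerivAt
      have h3 := h2.comp y h1
      rw [ContinuousLinearMap.comp_id] at h3
      exact h3.const_mul (ρ z)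
  set g : EuclideanSpace ℝ (Fin n) := ∫ z, ρ z • gradient u (x - h • z) with hgdef
  have hgradcont : Continuous fun w => gradient u w := by
    have heq : (fun w => gradient u w) = fun w =>
        (InnerProductSpace.toDual ℝ (EuclideanSpace ℝ (Fin n))).symm (fderiv ℝ u w) := rfl
    rw [heq]
    exact (InnerProductSpace.toDual ℝ _).symm.continuous.comp hfc
  have hvcont : Continuous fun z : EuclideanSpace ℝ (Fin n) => gradient u (x - h • z) :=
    hgradcont.comp (continuous_const.sub ((continuous_const (y := h)).smul continuous_id))
  have hgint : Integrable (fun z => ρ z • gradient u (x - h • z)) volume := by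
    apply Continuous.integrable_of_hasCompactSupport (hρc.smul hvcont)
    apply HasCompactSupport.mono hρsupp
    intro z hz
    simp only [Function.mem_support, ne_eq] at hz ⊢
    intro h0; exact hz (by simp [h0])
  have htd : ∀ w, (InnerProductSpace.toDual ℝ (EuclideanSpace ℝ (Fin n))) (gradient u w)
      = fderiv ℝ u w := fun w => ((hudiff w).hasGradientAt.hasFDerivAt).fderiv.symm ▸
        ((hudiff w).hasGradientAt.hasFDerivAt).fderiv
  have hSL : ∀ w : EuclideanSpace ℝ (Fin n),
      (InnerProductSpace.toDual ℝ (EuclideanSpace ℝ (Fin n))) w = innerSL ℝ w := by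
    intro w; ext y
    simp [InnerProductSpace.toDual_apply_apply]
  have hdual : (InnerProductSpace.toDual ℝ (EuclideanSpace ℝ (Fin n))) g
      = ∫ z, ρ z • fderiv ℝ u (x - h • z) := by
    rw [hSL, hgdef]
    rw [← ContinuousLinearMap.integral_comp_comm (innerSL ℝ) hgint]
    congr 1
    funext z
    rw [ContinuousLinearMap.map_smul]
    congr 1
    rw [← hSL, htd]
  refine ⟨g, ?_, ?_⟩
  · rw [hasGradientAt_iff_hasFDerivAt, hdual]
    exact hderiv
  · exact aux_integral_mem_convexHull n ρ hρc hρ0 hρsupp hρ1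
      (fun z => gradient u (x - h • z)) hvcont
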